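/- arXiv:2510.17294 — 4 statements merged into one kernel-verified Lean document; each statement's English description precedes it below -/
import Mathlib

section
/- Suppose m > 0 and Requirement 1 holds. Then for every integer k ≥ 1, the unique minimizer x_k* of J_k over ℝⁿ lies in the feasible set: g(x_k*) ≤ 1. -/
open Matrix Filter

noncomputable def fObj {n : ℕ} (Q : Matrix (Fin n) (Fin n) ℝ) (q : Fin n → ℝ) (x : Fin n → ℝ) : ℝ :=
  (1 / 2) * (x ⬝ᵥ Q.mulVec x) + q ⬝ᵥ x

noncomputable def gCon {n : ℕ} (A : Matrix (Fin n) (Fin n) ℝ) (v : Fin n → ℝ) (x : Fin n → ℝ) : ℝ :=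
  (x - v) ⬝ᵥ A.mulVec (x - v)

noncomputable def pPen {n : ℕ} (A : Matrix (Fin n) (Fin n) ℝ) (v : Fin n → ℝ) (m : ℝ) (k : ℕ)
    (x : Fin n → ℝ) : ℝ :=
  (m / (k : ℝ)) * (gCon A v x) ^ k

noncomputable def Jaux {n : ℕ} (Q : Matrix (Fin n) (Fin n) ℝ) (q : Fin n → ℝ)
    (A : Matrix (Fin n) (Fin n) ℝ) (v : Fin n → ℝ) (m : ℝ) (k : ℕ) (x : Fin n → ℝ) : ℝ :=
  fObj Q q x + pPen A v m k x

noncomputable def gradF {n : ℕ} (Q : Matrix (Fin n) (Fin n) ℝ) (q : Fin n → ℝ)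
    (x : Fin n → ℝ) : Fin n → ℝ :=
  Q.mulVec x + q

noncomputable def gradG {n : ℕ} (A : Matrix (Fin n) (Fin n) ℝ) (v : Fin n → ℝ)
    (x : Fin n → ℝ) : Fin n → ℝ :=
  (2 : ℝ) • A.mulVec (x - v)

noncomputable def gradJ {n : ℕ} (Q : Matrix (Fin n) (Fin n) ℝ) (q : Fin n → ℝ)
    (A : Matrix (Fin n) (Fin n) ℝ) (v : Fin n → ℝ) (m : ℝ) (k : ℕ) (x : Fin n → ℝ) : Fin n → ℝ :=
  gradF Q q x + (m * (gCon A v x) ^ (k - 1)) • gradG A v x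

noncomputable def lambdaMax {n : ℕ} (M : Matrix (Fin n) (Fin n) ℝ) : ℝ :=
  sSup {μ : ℝ | Module.End.HasEigenvalue (Matrix.toLin' M) μ}

noncomputable def lambdaMin {n : ℕ} (M : Matrix (Fin n) (Fin n) ℝ) : ℝ :=
  sInf {μ : ℝ | Module.End.HasEigenvalue (Matrix.toLin' M) μ}

noncomputable def enorm {n : ℕ} (w : Fin n → ℝ) : ℝ := Real.sqrt (w ⬝ᵥ w)

def Req1 {n : ℕ} (Q : Matrix (Fin n) (Fin n) ℝ) (q : Fin n → ℝ)
    (A : Matrix (Fin n) (Fin n) ℝ) (v : Fin n → ℝ) (m : ℝ) : Prop :=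
  ∀ x : Fin n → ℝ, gCon A v x = 1 →
    0 ≤ gradG A v x ⬝ᵥ (gradF Q q x + m • gradG A v x)

noncomputable def Lsmooth {n : ℕ} (Q A : Matrix (Fin n) (Fin n) ℝ) (m : ℝ) (k : ℕ) : ℝ :=
  lambdaMax (Q + (m * (4 * (k : ℝ) - 2)) • A)

def Req2 {n : ℕ} (Q : Matrix (Fin n) (Fin n) ℝ) (q : Fin n → ℝ)
    (A : Matrix (Fin n) (Fin n) ℝ) (v : Fin n → ℝ) (m : ℝ) : Prop :=
  ∀ x : Fin n → ℝ, gCon A v x = 1 →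
    ((gradF Q q x + m • gradG A v x) ⬝ᵥ (gradF Q q x + m • gradG A v x)) * _root_.enorm (gradG A v x) ≤
      2 * (Real.sqrt (lambdaMin A) / lambdaMax A) * Lsmooth Q A m 1 *
        ((gradF Q q x + m • gradG A v x) ⬝ᵥ gradG A v x)

lemma dot_symm' {n : ℕ} {Q : Matrix (Fin n) (Fin n) ℝ} (hQ : Qᵀ = Q) (x y : Fin n → ℝ) :
    x ⬝ᵥ Q *ᵥ y = y ⬝ᵥ Q *ᵥ x := by
  rw [Matrix.dotProduct_mulVec, ← Matrix.mulVec_transpose, hQ, dotProduct_comm]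

lemma herm_real' {n : ℕ} {Q : Matrix (Fin n) (Fin n) ℝ} (h : Q.IsHermitian) : Qᵀ = Q := by
  simpa [Matrix.IsHermitian, Matrix.conjTranspose_eq_transpose_of_trivial] using h

lemma dot_self_pos' {n : ℕ} {x : Fin n → ℝ} (hx : x ≠ 0) : 0 < x ⬝ᵥ x := by
  have h1 : 0 ≤ x ⬝ᵥ x := Finset.sum_nonneg fun i _ => mul_self_nonneg _
  rcases h1.lt_or_eq with h | h
  · exact h
  · exact absurd (by simpa using (dotProduct_self_eq_zero (v := x)).mp h.symm) hx

lemma expand_J' {n : ℕ} (Q A : Matrix (Fin n) (Fin n) ℝ) (q v : Fin n → ℝ) (m : ℝ) (k : ℕ)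
    (xks d : Fin n → ℝ) (t : ℝ) :
    Jaux Q q A v m k (xks + t • d) =
      fObj Q q xks
        + ((1/2) * (xks ⬝ᵥ Q *ᵥ d + d ⬝ᵥ Q *ᵥ xks) + q ⬝ᵥ d) * t
        + ((1/2) * (d ⬝ᵥ Q *ᵥ d)) * t ^ 2
        + (m / k) * ((xks - v) ⬝ᵥ A *ᵥ (xks - v)
            + ((xks - v) ⬝ᵥ A *ᵥ d + d ⬝ᵥ A *ᵥ (xks - v)) * t
            + (d ⬝ᵥ A *ᵥ d) * t ^ 2) ^ k := by
  have h1 : xks + t • d - v = (xks - v) + t • d := by abel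
  unfold Jaux fObj pPen gCon
  rw [h1]
  simp only [mulVec_add, mulVec_smul, dotProduct_add, add_dotProduct, dotProduct_smul,
    smul_dotProduct, smul_eq_mul]
  ring

lemma lin0' (K Z : ℝ) (h : ∀ t : ℝ, 0 ≤ t * K + t ^ 2 * Z) : K = 0 := by
  by_contra hK
  have hd : (0:ℝ) < (1 + Z ^ 2) ^ 2 := by positivity
  have h1 := h (-(K / (1 + Z ^ 2)))
  have key : (-(K / (1 + Z ^ 2))) * K + (-(K / (1 + Z ^ 2))) ^ 2 * Z
      = (K ^ 2 * (Z - 1 - Z ^ 2)) / (1 + Z ^ 2) ^ 2 := by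
    field_simp
    ring
  rw [key, le_div_iff₀ hd] at h1
  have hk2 : K ^ 2 ≤ 0 := by nlinarith [sq_nonneg (2 * Z - 1), sq_nonneg K]
  exact hK (by nlinarith [sq_nonneg K])

lemma stationarity' {n : ℕ} (Q A : Matrix (Fin n) (Fin n) ℝ) (q v : Fin n → ℝ)
    (hQs : Qᵀ = Q) (hAs : Aᵀ = A) (m : ℝ) (k : ℕ) (hk : 1 ≤ k) (xks : Fin n → ℝ)
    (hmin : ∀ x : Fin n → ℝ, Jaux Q q A v m k xks ≤ Jaux Q q A v m k x) (d : Fin n → ℝ) :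
    d ⬝ᵥ (Q *ᵥ xks + q) + 2 * m * (gCon A v xks) ^ (k - 1) * (d ⬝ᵥ (A *ᵥ (xks - v))) = 0 := by
  have hfun : (fun t : ℝ => Jaux Q q A v m k (xks + t • d)) =
      fun t : ℝ => fObj Q q xks
        + ((1/2) * (xks ⬝ᵥ Q *ᵥ d + d ⬝ᵥ Q *ᵥ xks) + q ⬝ᵥ d) * t
        + ((1/2) * (d ⬝ᵥ Q *ᵥ d)) * t ^ 2
        + (m / k) * ((xks - v) ⬝ᵥ A *ᵥ (xks - v)
            + ((xks - v) ⬝ᵥ A *ᵥ d + d ⬝ᵥ A *ᵥ (xks - v)) * t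
            + (d ⬝ᵥ A *ᵥ d) * t ^ 2) ^ k :=
    funext fun t => expand_J' Q A q v m k xks d t
  set c : ℝ := (xks - v) ⬝ᵥ A *ᵥ (xks - v) with hc
  set β : ℝ := (1/2) * (xks ⬝ᵥ Q *ᵥ d + d ⬝ᵥ Q *ᵥ xks) + q ⬝ᵥ d with hβ
  set γ : ℝ := (1/2) * (d ⬝ᵥ Q *ᵥ d) with hγ
  set β₂ : ℝ := (xks - v) ⬝ᵥ A *ᵥ d + d ⬝ᵥ A *ᵥ (xks - v) with hβ₂
  set γ₂ : ℝ := d ⬝ᵥ A *ᵥ d with hγ₂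
  have hderiv : HasDerivAt (fun t : ℝ => Jaux Q q A v m k (xks + t • d))
      (β + (m / k) * (k * c ^ (k - 1) * β₂)) 0 := by
    rw [hfun]
    have hin : HasDerivAt (fun t : ℝ => c + β₂ * t + γ₂ * t ^ 2) β₂ 0 := by
      have := (((hasDerivAt_id (0:ℝ)).const_mul β₂).const_add c).add
        (((hasDerivAt_pow 2 (0:ℝ)).const_mul γ₂))
      simpa [Pi.add_def] using this
    have hpow := (hin.pow k).const_mul (m / k)
    have hlin : HasDerivAt (fun t : ℝ => fObj Q q xks + β * t + γ * t ^ 2) β 0 := by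
      have := (((hasDerivAt_id (0:ℝ)).const_mul β).const_add (fObj Q q xks)).add
        (((hasDerivAt_pow 2 (0:ℝ)).const_mul γ))
      simpa [Pi.add_def] using this
    have := hlin.add hpow
    simp only [mul_comm] at this ⊢
    exact this.congr_deriv (by simp)
  have hlm : IsLocalMin (fun t : ℝ => Jaux Q q A v m k (xks + t • d)) 0 := by
    apply Filter.Eventually.of_forall
    intro t
    simpa using hmin (xks + t • d)
  have hzero := hlm.hasDerivAt_eq_zero hderiv
  have hk0 : (k : ℝ) ≠ 0 := by
    have : 0 < k := hk
    positivity
  have hβd : β = d ⬝ᵥ (Q *ᵥ xks + q) := by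
    rw [hβ, dot_symm' hQs xks d, dotProduct_add, dotProduct_comm q d]; ring
  have hsimp : (m / k) * (k * c ^ (k - 1) * β₂) =
      2 * m * c ^ (k - 1) * (d ⬝ᵥ (A *ᵥ (xks - v))) := by
    rw [hβ₂, dot_symm' hAs (xks - v) d]; field_simp; ring
  rw [hβd, hsimp] at hzero
  have hgc : gCon A v xks = c := rfl
  rw [hgc]
  exact hzero

set_option maxHeartbeats 2000000

/-- Under Requirement 1 and `m > 0`, for every `k ≥ 1` the (unique)
minimizer of `J_k` over `ℝⁿ` lies in the feasible set, i.e. `g(x_k*) ≤ 1`. -/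
theorem auxiliary_minimizer_feasible {n : ℕ} (hn : 1 ≤ n)
    (Q A : Matrix (Fin n) (Fin n) ℝ) (q v : Fin n → ℝ)
    (hQ : Q.PosSemidef) (hA : A.PosDef) (m : ℝ) (hm : 0 < m)
    (hreq1 : Req1 Q q A v m) (k : ℕ) (hk : 1 ≤ k)
    (xks : Fin n → ℝ) (hmin : ∀ x : Fin n → ℝ, Jaux Q q A v m k xks ≤ Jaux Q q A v m k x) :
    gCon A v xks ≤ 1 := by
  by_contra hcon
  push_neg at hcon
  have hQs : Qᵀ = Q := herm_real' hQ.1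
  have hAs : Aᵀ = A := herm_real' hA.1
  obtain ⟨u, hu⟩ : ∃ w : Fin n → ℝ, w = xks - v := ⟨_, rfl⟩
  obtain ⟨c, hcdef⟩ : ∃ x : ℝ, x = u ⬝ᵥ A *ᵥ u := ⟨_, rfl⟩
  have hgc : gCon A v xks = c := by rw [hcdef, hu]; rfl
  have hc1 : 1 < c := by rw [← hgc]; exact hcon
  have hc0 : 0 < c := by linarith only [hc1]
  have hstat : ∀ d : Fin n → ℝ,
      d ⬝ᵥ (Q *ᵥ xks + q) + 2 * m * c ^ (k - 1) * (d ⬝ᵥ (A *ᵥ u)) = 0 := by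
    intro d
    have := stationarity' Q A q v hQs hAs m k hk xks hmin d
    rwa [hgc, ← hu] at this
  -- translated Requirement 1
  have hC : ∀ z : Fin n → ℝ, z ⬝ᵥ A *ᵥ z = 1 →
      (A *ᵥ z) ⬝ᵥ (Q *ᵥ u) + 2 * m * c ^ (k - 1) * ((A *ᵥ z) ⬝ᵥ (A *ᵥ u))
        ≤ (A *ᵥ z) ⬝ᵥ (Q *ᵥ z) + 2 * m * ((A *ᵥ z) ⬝ᵥ (A *ᵥ z)) := by
    intro z hz
    have hg : gCon A v (v + z) = 1 := by
      simpa [gCon, add_sub_cancel_left] using hz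
    have h0 := hreq1 (v + z) hg
    simp only [gradG, gradF, add_sub_cancel_left] at h0
    have hvz : v + z = xks + (z - u) := by rw [hu]; abel
    rw [hvz] at h0
    simp only [mulVec_add, mulVec_sub, dotProduct_add, dotProduct_sub, smul_dotProduct,
      dotProduct_smul, smul_eq_mul, smul_smul] at h0
    have hst := hstat (A *ᵥ z)
    simp only [dotProduct_add] at hst
    nlinarith only [h0, hst]
  -- scaling factor
  obtain ⟨s, hsdef⟩ : ∃ x : ℝ, x = (Real.sqrt c)⁻¹ := ⟨_, rfl⟩
  have hsq : Real.sqrt c ^ 2 = c := Real.sq_sqrt hc0.le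
  have hsqrt1 : 1 < Real.sqrt c := by nlinarith only [Real.sqrt_nonneg c, hsq, hc1]
  have hs0 : 0 < s := by rw [hsdef]; positivity
  have hs1 : s < 1 := by rw [hsdef]; exact inv_lt_one_of_one_lt₀ hsqrt1
  have hs2 : s ^ 2 * c = 1 := by
    rw [hsdef, ← hsq]
    field_simp
    simp only [hsq]
  obtain ⟨T, hTdef⟩ : ∃ x : ℝ, x = (A *ᵥ u) ⬝ᵥ (Q *ᵥ u) := ⟨_, rfl⟩
  obtain ⟨S, hSdef⟩ : ∃ x : ℝ, x = (A *ᵥ u) ⬝ᵥ (A *ᵥ u) := ⟨_, rfl⟩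
  have hAu0 : A *ᵥ u ≠ 0 := by
    intro h
    rw [h, dotProduct_zero] at hcdef
    rw [hcdef] at hc0
    exact lt_irrefl 0 hc0
  have hS : 0 < S := by rw [hSdef]; exact dot_self_pos' hAu0
  obtain ⟨P, hPdef⟩ : ∃ x : ℝ, x = c ^ (k - 1) := ⟨_, rfl⟩
  have hP1 : 1 ≤ P := by rw [hPdef]; exact one_le_pow₀ hc1.le
  have hz1 : (s • u) ⬝ᵥ A *ᵥ (s • u) = 1 := by
    simp only [mulVec_smul, dotProduct_smul, smul_dotProduct, smul_eq_mul]
    rw [← hcdef]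
    linear_combination hs2
  have hz2 : ((-s) • u) ⬝ᵥ A *ᵥ ((-s) • u) = 1 := by
    simp only [mulVec_smul, dotProduct_smul, smul_dotProduct, smul_eq_mul]
    rw [← hcdef]
    linear_combination hs2
  have I1 := hC (s • u) hz1
  have I2 := hC ((-s) • u) hz2
  simp only [mulVec_smul, dotProduct_smul, smul_dotProduct, smul_eq_mul] at I1 I2
  rw [← hTdef, ← hSdef, ← hPdef] at I1 I2
  -- derive P = 1 and T + 2 m S = 0
  have hle1 : T + 2 * m * P * S ≤ s * (T + 2 * m * S) := by
    have e1 : s * (T + 2 * m * P * S) ≤ s * (s * (T + 2 * m * S)) := by linarith only [I1]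
    exact le_of_mul_le_mul_left e1 hs0
  have hle2 : -(T + 2 * m * P * S) ≤ s * (T + 2 * m * S) := by
    have e2 : s * (-(T + 2 * m * P * S)) ≤ s * (s * (T + 2 * m * S)) := by linarith only [I2]
    exact le_of_mul_le_mul_left e2 hs0
  have hXnn : 0 ≤ T + 2 * m * S := by
    have h1 : s * 0 ≤ s * (T + 2 * m * S) := by linarith only [hle1, hle2]
    exact le_of_mul_le_mul_left h1 hs0
  have hsXle : s * (T + 2 * m * S) ≤ T + 2 * m * S :=
    mul_le_of_le_one_left hXnn hs1.le
  have hG0 : 0 ≤ 2 * m * (P - 1) * S := by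
    have := mul_nonneg (mul_nonneg (mul_nonneg (by norm_num : (0:ℝ) ≤ 2) hm.le)
      (by linarith only [hP1] : 0 ≤ P - 1)) hS.le
    linarith only [this]
  have hX0 : T + 2 * m * S = 0 := by
    have hle : T + 2 * m * S ≤ 0 := by nlinarith only [hle1, hG0, hs1, hXnn]
    linarith only [hle, hXnn]
  have hGle : 2 * m * (P - 1) * S ≤ 0 := by linarith only [hle1, hsXle]
  have hPeq : P = 1 := by nlinarith only [hGle, hP1, mul_pos hm hS]
  -- the vector Mu and φ
  obtain ⟨Mu, hMudef⟩ : ∃ w : Fin n → ℝ, w = Q *ᵥ u + (2 * m) • (A *ᵥ u) := ⟨_, rfl⟩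
  obtain ⟨φ, hφdef⟩ : ∃ w : Fin n → ℝ, w = A *ᵥ Mu := ⟨_, rfl⟩
  have hCphi : ∀ z : Fin n → ℝ, z ⬝ᵥ A *ᵥ z = 1 →
      z ⬝ᵥ φ ≤ (A *ᵥ z) ⬝ᵥ (Q *ᵥ z) + 2 * m * ((A *ᵥ z) ⬝ᵥ (A *ᵥ z)) := by
    intro z hz
    have h1 := hC z hz
    rw [← hPdef, hPeq] at h1
    have h2 : z ⬝ᵥ φ = (A *ᵥ z) ⬝ᵥ (Q *ᵥ u) + 2 * m * ((A *ᵥ z) ⬝ᵥ (A *ᵥ u)) := by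
      rw [hφdef, dot_symm' hAs z Mu, dotProduct_comm, hMudef]
      simp only [dotProduct_add, dotProduct_smul, smul_eq_mul]
    linarith only [h1, h2]
  -- unnormalized form of the boundary condition
  have hC3 : ∀ (h : Fin n → ℝ) (ρ : ℝ), 0 < ρ → ρ ^ 2 = h ⬝ᵥ A *ᵥ h →
      ρ * (h ⬝ᵥ φ) ≤ (A *ᵥ h) ⬝ᵥ (Q *ᵥ h) + 2 * m * ((A *ᵥ h) ⬝ᵥ (A *ᵥ h)) := by
    intro h ρ hρ hρ2
    have hρ0 : ρ ≠ 0 := ne_of_gt hρ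
    have hz : (ρ⁻¹ • h) ⬝ᵥ A *ᵥ (ρ⁻¹ • h) = 1 := by
      simp only [mulVec_smul, dotProduct_smul, smul_dotProduct, smul_eq_mul]
      rw [← hρ2]
      field_simp
      try ring
    have h1 := hCphi (ρ⁻¹ • h) hz
    simp only [mulVec_smul, dotProduct_smul, smul_dotProduct, smul_eq_mul] at h1
    have e1 : ρ * ρ * (ρ⁻¹ * (h ⬝ᵥ φ)) = ρ * (h ⬝ᵥ φ) := by
      field_simp
      try ring
    have e2 : ρ * ρ * (ρ⁻¹ * (ρ⁻¹ * ((A *ᵥ h) ⬝ᵥ (Q *ᵥ h))) +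
        2 * m * (ρ⁻¹ * (ρ⁻¹ * ((A *ᵥ h) ⬝ᵥ (A *ᵥ h))))) =
        (A *ᵥ h) ⬝ᵥ (Q *ᵥ h) + 2 * m * ((A *ᵥ h) ⬝ᵥ (A *ᵥ h)) := by
      field_simp
      try ring
    calc ρ * (h ⬝ᵥ φ) = ρ * ρ * (ρ⁻¹ * (h ⬝ᵥ φ)) := e1.symm
      _ ≤ ρ * ρ * (ρ⁻¹ * (ρ⁻¹ * ((A *ᵥ h) ⬝ᵥ (Q *ᵥ h))) +
          2 * m * (ρ⁻¹ * (ρ⁻¹ * ((A *ᵥ h) ⬝ᵥ (A *ᵥ h))))) := by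
        exact mul_le_mul_of_nonneg_left h1 (le_of_lt (mul_pos hρ hρ))
      _ = _ := e2
  -- nonnegativity of the quadratic form h ↦ (Ah)·(Qh) + 2m (Ah)·(Ah)
  have hqnn : ∀ h : Fin n → ℝ,
      0 ≤ (A *ᵥ h) ⬝ᵥ (Q *ᵥ h) + 2 * m * ((A *ᵥ h) ⬝ᵥ (A *ᵥ h)) := by
    intro h
    by_cases h0 : h = 0
    · simp [h0]
    · have hpos : 0 < h ⬝ᵥ A *ᵥ h := by simpa using hA.dotProduct_mulVec_pos h0
      have hρ : 0 < Real.sqrt (h ⬝ᵥ A *ᵥ h) := Real.sqrt_pos.mpr hpos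
      have hρ2 : Real.sqrt (h ⬝ᵥ A *ᵥ h) ^ 2 = h ⬝ᵥ A *ᵥ h := Real.sq_sqrt hpos.le
      have n1 := hC3 h _ hρ hρ2
      have hρ2' : Real.sqrt (h ⬝ᵥ A *ᵥ h) ^ 2 = (-h) ⬝ᵥ A *ᵥ (-h) := by
        rw [Matrix.mulVec_neg, dotProduct_neg, neg_dotProduct, neg_neg]
        exact hρ2
      have n2 := hC3 (-h) _ hρ hρ2'
      simp only [mulVec_neg, neg_dotProduct, dotProduct_neg, neg_neg] at n2
      linarith only [n1, n2]
  -- scalar quantities for the final argument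
  obtain ⟨F, hFdef⟩ : ∃ x : ℝ, x = φ ⬝ᵥ φ := ⟨_, rfl⟩
  obtain ⟨W, hWdef⟩ : ∃ x : ℝ, x = u ⬝ᵥ (A *ᵥ φ) := ⟨_, rfl⟩
  obtain ⟨V, hVdef⟩ : ∃ x : ℝ, x = φ ⬝ᵥ (A *ᵥ φ) := ⟨_, rfl⟩
  obtain ⟨Z, hZdef⟩ : ∃ x : ℝ,
      x = (A *ᵥ φ) ⬝ᵥ (Q *ᵥ φ) + 2 * m * ((A *ᵥ φ) ⬝ᵥ (A *ᵥ φ)) := ⟨_, rfl⟩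
  obtain ⟨K, hKdef⟩ : ∃ x : ℝ, x = (A *ᵥ u) ⬝ᵥ (Q *ᵥ φ) + (A *ᵥ φ) ⬝ᵥ (Q *ᵥ u) +
      2 * m * ((A *ᵥ u) ⬝ᵥ (A *ᵥ φ)) + 2 * m * ((A *ᵥ φ) ⬝ᵥ (A *ᵥ u)) := ⟨_, rfl⟩
  have hexp : ∀ t : ℝ,
      (A *ᵥ (u + t • φ)) ⬝ᵥ (Q *ᵥ (u + t • φ)) +
        2 * m * ((A *ᵥ (u + t • φ)) ⬝ᵥ (A *ᵥ (u + t • φ))) =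
      (T + 2 * m * S) + t * K + t ^ 2 * Z := by
    intro t
    rw [hKdef, hZdef, hTdef, hSdef]
    simp only [mulVec_add, mulVec_smul, dotProduct_add, add_dotProduct, dotProduct_smul,
      smul_dotProduct, smul_eq_mul]
    ring
  have hKzero : K = 0 := by
    apply lin0' K Z
    intro t
    have h1 := hqnn (u + t • φ)
    rw [hexp t, hX0] at h1
    linarith only [h1]
  -- basic positivity facts
  have huMu : 0 < u ⬝ᵥ Mu := by
    have hq0 : 0 ≤ u ⬝ᵥ Q *ᵥ u := by simpa using hQ.dotProduct_mulVec_nonneg u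
    rw [hMudef]
    simp only [dotProduct_add, dotProduct_smul, smul_eq_mul]
    rw [← hcdef]
    nlinarith only [hc1, hm, hq0]
  have hMune : Mu ≠ 0 := by
    intro h
    rw [h, dotProduct_zero] at huMu
    exact lt_irrefl _ huMu
  have hMuφ : 0 < Mu ⬝ᵥ φ := by
    rw [hφdef]
    simpa using hA.dotProduct_mulVec_pos hMune
  have hφne : φ ≠ 0 := by
    intro h
    rw [h, dotProduct_zero] at hMuφ
    exact lt_irrefl _ hMuφ
  have hF : 0 < F := by rw [hFdef]; exact dot_self_pos' hφne
  have hV : 0 < V := by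
    rw [hVdef]; simpa using hA.dotProduct_mulVec_pos hφne
  have huφ : u ⬝ᵥ φ = 0 := by
    have h1 : u ⬝ᵥ (A *ᵥ Mu) = Mu ⬝ᵥ (A *ᵥ u) := dot_symm' hAs u Mu
    rw [hφdef, h1, hMudef]
    simp only [add_dotProduct, smul_dotProduct, smul_eq_mul]
    rw [dotProduct_comm (Q *ᵥ u) (A *ᵥ u)]
    rw [← hTdef, ← hSdef]
    linarith only [hX0]
  -- choice of t
  obtain ⟨t, htdef⟩ : ∃ x : ℝ,
      x = min (c / (4 * (|W| + 1))) (F / (2 * (|Z| + 1))) := ⟨_, rfl⟩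
  have ht : 0 < t := by
    rw [htdef]
    apply lt_min
    · positivity
    · positivity
  have ht1 : t * (4 * (|W| + 1)) ≤ c := by
    have h := min_le_left (c / (4 * (|W| + 1))) (F / (2 * (|Z| + 1)))
    rw [← htdef] at h
    exact (le_div_iff₀ (by positivity)).mp h
  have ht2 : t * (2 * (|Z| + 1)) ≤ F := by
    have h := min_le_right (c / (4 * (|W| + 1))) (F / (2 * (|Z| + 1)))
    rw [← htdef] at h
    exact (le_div_iff₀ (by positivity)).mp h
  have hEexp : (u + t • φ) ⬝ᵥ A *ᵥ (u + t • φ) = c + 2 * t * W + t ^ 2 * V := by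
    rw [hcdef, hWdef, hVdef]
    simp only [mulVec_add, mulVec_smul, dotProduct_add, add_dotProduct, dotProduct_smul,
      smul_dotProduct, smul_eq_mul]
    rw [dot_symm' hAs φ u]
    ring
  have hWbound : t * (-|W|) ≤ t * W :=
    mul_le_mul_of_nonneg_left (neg_abs_le W) ht.le
  have hEge : c / 2 ≤ (u + t • φ) ⬝ᵥ A *ᵥ (u + t • φ) := by
    rw [hEexp]
    nlinarith only [hWbound, ht1, ht.le, sq_nonneg t, hV.le, abs_nonneg W]
  have hEpos : 0 < (u + t • φ) ⬝ᵥ A *ᵥ (u + t • φ) := by linarith only [hEge, hc0]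
  have hρpos : 0 < Real.sqrt ((u + t • φ) ⬝ᵥ A *ᵥ (u + t • φ)) := Real.sqrt_pos.mpr hEpos
  have hρ2 : Real.sqrt ((u + t • φ) ⬝ᵥ A *ᵥ (u + t • φ)) ^ 2
      = (u + t • φ) ⬝ᵥ A *ᵥ (u + t • φ) := Real.sq_sqrt hEpos.le
  obtain ⟨ρ, hρdef⟩ : ∃ x : ℝ, x = Real.sqrt ((u + t • φ) ⬝ᵥ A *ᵥ (u + t • φ)) := ⟨_, rfl⟩
  rw [← hρdef] at hρpos hρ2
  have hρhalf : 1 / 2 < ρ := by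
    nlinarith only [hρ2, hEge, hc1, hρpos]
  have hfin := hC3 (u + t • φ) ρ hρpos hρ2
  have hdot : (u + t • φ) ⬝ᵥ φ = t * F := by
    simp only [add_dotProduct, smul_dotProduct, smul_eq_mul, huφ, zero_add]
    rw [hFdef]
  rw [hdot, hexp t, hX0, hKzero] at hfin
  -- hfin : ρ * (t * F) ≤ 0 + t * 0 + t ^ 2 * Z
  have p1 : t * Z ≤ t * |Z| := mul_le_mul_of_nonneg_left (le_abs_self Z) ht.le
  have q1 : t * Z ≤ F / 2 - t := by linarith only [p1, ht2]
  have q2 : t * (t * Z) ≤ t * (F / 2 - t) := mul_le_mul_of_nonneg_left q1 ht.le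
  have hprod : 0 < (ρ - 1 / 2) * (t * F) :=
    mul_pos (by linarith only [hρhalf]) (mul_pos ht hF)
  nlinarith only [hfin, q2, hprod, sq_nonneg t, ht, hF]
end

section
/- Suppose m > 0 and Requirement 1 holds. Let X* be the set of minimizers of f over C, let x* be the unique minimizer of g over X*, and for each k ≥ 1 let x_k* be the unique minimizer of J_k over ℝⁿ. Then x_k* converges to x* as k → ∞, i.e., ‖x_k* − x*‖ → 0. -/
open Matrix Filter

namespace AuxConv
variable {n : ℕ}

variable {n : ℕ}

lemma dot_sym (M : Matrix (Fin n) (Fin n) ℝ) (hM : Mᵀ = M) (x d : Fin n → ℝ) :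
    x ⬝ᵥ M.mulVec d = d ⬝ᵥ M.mulVec x := by
  rw [Matrix.dotProduct_mulVec, ← Matrix.mulVec_transpose, hM, dotProduct_comm]

lemma quad_expand (M : Matrix (Fin n) (Fin n) ℝ) (hM : Mᵀ = M) (x d : Fin n → ℝ) (t : ℝ) :
    (x + t • d) ⬝ᵥ M.mulVec (x + t • d)
      = x ⬝ᵥ M.mulVec x + t * (2 * (d ⬝ᵥ M.mulVec x)) + t ^ 2 * (d ⬝ᵥ M.mulVec d) := by
  have h := dot_sym M hM x d
  simp only [Matrix.mulVec_add, Matrix.mulVec_smul, dotProduct_add,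
    add_dotProduct, dotProduct_smul, smul_dotProduct, smul_eq_mul, h]
  ring

lemma hasDerivAt_poly (c0 c1 c2 : ℝ) :
    HasDerivAt (fun t : ℝ => c0 + t * c1 + t ^ 2 * c2) c1 0 := by
  have h1 : HasDerivAt (fun t : ℝ => t) 1 0 := hasDerivAt_id 0
  have h := ((h1.mul_const c1).const_add c0).add ((hasDerivAt_pow 2 (0:ℝ)).mul_const c2)
  simp at h
  exact h

lemma hasDerivAt_J (Q A : Matrix (Fin n) (Fin n) ℝ) (hQs : Qᵀ = Q) (hAs : Aᵀ = A)
    (q v : Fin n → ℝ) (m : ℝ) (k : ℕ) (hk : 1 ≤ k) (x d : Fin n → ℝ) :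
    HasDerivAt (fun t : ℝ => Jaux Q q A v m k (x + t • d))
      (d ⬝ᵥ Q.mulVec x + q ⬝ᵥ d
        + m * (gCon A v x) ^ (k - 1) * (2 * (d ⬝ᵥ A.mulVec (x - v)))) 0 := by
  have hkR : (k : ℝ) ≠ 0 := Nat.cast_ne_zero.mpr (by omega)
  have hfun : (fun t : ℝ => Jaux Q q A v m k (x + t • d))
      = fun t : ℝ =>
        (1/2) * (x ⬝ᵥ Q.mulVec x + t * (2 * (d ⬝ᵥ Q.mulVec x)) + t ^ 2 * (d ⬝ᵥ Q.mulVec d))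
        + (q ⬝ᵥ x + t * (q ⬝ᵥ d) + t ^ 2 * 0)
        + (m / (k:ℝ)) * ((x - v) ⬝ᵥ A.mulVec (x - v)
            + t * (2 * (d ⬝ᵥ A.mulVec (x - v))) + t ^ 2 * (d ⬝ᵥ A.mulVec d)) ^ k := by
    funext t
    have h1 : x + t • d - v = (x - v) + t • d := by rw [add_sub_right_comm]
    simp only [Jaux, fObj, pPen, gCon, h1, quad_expand Q hQs x d t, quad_expand A hAs (x - v) d t,
      dotProduct_add, dotProduct_smul, smul_eq_mul]
    ring
  rw [hfun]
  have hQpart := (hasDerivAt_poly (x ⬝ᵥ Q.mulVec x) (2 * (d ⬝ᵥ Q.mulVec x))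
    (d ⬝ᵥ Q.mulVec d)).const_mul (1/2 : ℝ)
  have hqpart := hasDerivAt_poly (q ⬝ᵥ x) (q ⬝ᵥ d) 0
  have hgpoly := hasDerivAt_poly ((x - v) ⬝ᵥ A.mulVec (x - v))
    (2 * (d ⬝ᵥ A.mulVec (x - v))) (d ⬝ᵥ A.mulVec d)
  have hgk := (hgpoly.pow k).const_mul (m / (k:ℝ))
  have htot := (hQpart.add hqpart).add hgk
  refine htot.congr_deriv ?_
  have h0 : ((x - v) ⬝ᵥ A.mulVec (x - v) + 0 * (2 * (d ⬝ᵥ A.mulVec (x - v)))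
      + 0 ^ 2 * (d ⬝ᵥ A.mulVec d)) = gCon A v x := by simp [gCon]
  rw [h0]
  field_simp

lemma dot_self_nonneg (w : Fin n → ℝ) : 0 ≤ w ⬝ᵥ w :=
  Finset.sum_nonneg fun i _ => mul_self_nonneg _

lemma dot_self_pos {w : Fin n → ℝ} (hw : w ≠ 0) : 0 < w ⬝ᵥ w :=
  lt_of_le_of_ne (dot_self_nonneg w) (fun h => hw (dotProduct_self_eq_zero.mp h.symm))

lemma feasible (Q A : Matrix (Fin n) (Fin n) ℝ) (q v : Fin n → ℝ)
    (hQs : Qᵀ = Q) (hAs : Aᵀ = A) (hA : A.PosDef) (m : ℝ) (hm : 0 < m)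
    (hreq1 : Req1 Q q A v m) (k : ℕ) (hk2 : 2 ≤ k) (x : Fin n → ℝ)
    (hminx : ∀ y : Fin n → ℝ, Jaux Q q A v m k x ≤ Jaux Q q A v m k y) :
    gCon A v x ≤ 1 := by
  by_contra hc'
  push_neg at hc'
  set c : ℝ := gCon A v x with hcdef
  have hc : 1 < c := hc'
  have hc0 : (0:ℝ) < c := lt_trans one_pos hc
  set w : Fin n → ℝ := x - v with hwdef
  have hgw : c = w ⬝ᵥ A.mulVec w := rfl
  have hxvw : x = v + w := by rw [hwdef]; abel
  have hwne : w ≠ 0 := by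
    intro h
    rw [h] at hgw
    simp [zero_dotProduct] at hgw
    linarith
  set d : Fin n → ℝ := A.mulVec w with hddef
  have hdne : d ≠ 0 := by
    intro h
    have : c = 0 := by rw [hgw, h, dotProduct_zero]
    linarith
  set N : ℝ := d ⬝ᵥ d with hNdef
  have hN : 0 < N := dot_self_pos hdne
  -- first order condition
  have hloc : IsLocalMin (fun t : ℝ => Jaux Q q A v m k (x + t • d)) 0 := by
    have h0 : (fun t : ℝ => Jaux Q q A v m k (x + t • d)) 0 = Jaux Q q A v m k x := by
      simp
    exact Filter.Eventually.of_forall fun t => by rw [h0]; exact hminx _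
  have hzero := hloc.hasDerivAt_eq_zero
    (hasDerivAt_J Q A hQs hAs q v m k (by omega) x d)
  -- abbreviations
  set α : ℝ := d ⬝ᵥ Q.mulVec v + q ⬝ᵥ d with hαdef
  set β : ℝ := d ⬝ᵥ Q.mulVec w with hβdef
  set c' : ℝ := c ^ (k - 1) with hc'def
  have hc'1 : 1 < c' := one_lt_pow₀ hc (by omega)
  have h3 : α + β + 2 * m * c' * N = 0 := by
    have e1 : d ⬝ᵥ Q.mulVec x = d ⬝ᵥ Q.mulVec v + β := by
      rw [hxvw, Matrix.mulVec_add, dotProduct_add]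
    have e2 : d ⬝ᵥ A.mulVec (x - v) = N := by rw [← hwdef, ← hddef]
    rw [e1, e2] at hzero
    rw [hαdef, hc'def]
    linarith [hzero]
  -- Req1 at the two boundary points
  have hgs : ∀ s : ℝ, gCon A v (v + s • w) = s ^ 2 * c := by
    intro s
    rw [hgw]
    simp only [gCon, add_sub_cancel_left, smul_dotProduct, dotProduct_smul,
      Matrix.mulVec_smul, smul_eq_mul]
    ring
  have hexp : ∀ s : ℝ, gradG A v (v + s • w) ⬝ᵥ (gradF Q q (v + s • w) + m • gradG A v (v + s • w))
      = 2 * s * (α + s * β + 2 * m * s * N) := by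
    intro s
    simp only [gradG, gradF, add_sub_cancel_left, Matrix.mulVec_add, Matrix.mulVec_smul,
      smul_dotProduct, dotProduct_add, dotProduct_smul, smul_eq_mul,
      Pi.add_apply, Pi.smul_apply, hαdef, hβdef, hNdef, hddef]
    rw [dotProduct_comm q (A.mulVec (x - v))]
    ring
  set t0 : ℝ := (Real.sqrt c)⁻¹ with ht0def
  have hsqrt1 : 1 < Real.sqrt c := by
    rw [← Real.sqrt_one]; exact Real.sqrt_lt_sqrt zero_le_one hc
  have ht0pos : 0 < t0 := inv_pos.mpr (lt_trans one_pos hsqrt1)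
  have ht0lt1 : t0 < 1 := inv_lt_one_of_one_lt₀ hsqrt1
  have hsq : t0 ^ 2 * c = 1 := by
    rw [ht0def]
    rw [inv_pow]
    rw [Real.sq_sqrt hc0.le]
    field_simp
  have hb1 : gCon A v (v + t0 • w) = 1 := by rw [hgs t0]; exact hsq
  have hb2 : gCon A v (v + (-t0) • w) = 1 := by rw [hgs (-t0)]; rw [neg_pow]; simpa using hsq
  have h1 := hreq1 _ hb1
  have h2 := hreq1 _ hb2
  rw [hexp t0] at h1
  rw [hexp (-t0)] at h2
  -- h1 : 0 ≤ 2*t0*(α + t0*β + 2*m*t0*N)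
  -- h2 : 0 ≤ 2*(-t0)*(α + (-t0)*β + 2*m*(-t0)*N)
  have key1 : 0 ≤ (1 + t0) * (2 * t0 * (α + t0 * β + 2 * m * t0 * N)) :=
    mul_nonneg (by linarith) h1
  have key2 : 0 ≤ (1 - t0) * (2 * (-t0) * (α + (-t0) * β + 2 * m * (-t0) * N)) :=
    mul_nonneg (by linarith) h2
  have key3 : t0 ^ 2 * (α + β + 2 * m * c' * N) = 0 := by rw [h3]; ring
  have hpos : 0 < m * N * t0 ^ 2 * (c' - 1) := by
    apply mul_pos (mul_pos (mul_pos hm hN) (pow_pos ht0pos 2))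
    linarith
  nlinarith [key1, key2, key3, hpos]



lemma continuous_dot_self : Continuous fun x : Fin n → ℝ => x ⬝ᵥ x := by
  simp only [dotProduct]; fun_prop

lemma continuous_quad (M : Matrix (Fin n) (Fin n) ℝ) :
    Continuous fun x : Fin n → ℝ => x ⬝ᵥ M.mulVec x := by
  simp only [dotProduct, Matrix.mulVec]
  fun_prop

lemma continuous_gCon (A : Matrix (Fin n) (Fin n) ℝ) (v : Fin n → ℝ) :
    Continuous fun x : Fin n → ℝ => gCon A v x := by
  simp only [gCon]
  exact (continuous_quad A).comp (continuous_id.sub continuous_const)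

lemma continuous_fObj (Q : Matrix (Fin n) (Fin n) ℝ) (q : Fin n → ℝ) :
    Continuous fun x : Fin n → ℝ => fObj Q q x := by
  simp only [fObj, dotProduct, Matrix.mulVec]
  fun_prop

lemma norm_le_sqrt_dot (w : Fin n → ℝ) : ‖w‖ ≤ Real.sqrt (w ⬝ᵥ w) := by
  rw [pi_norm_le_iff_of_nonneg (Real.sqrt_nonneg _)]
  intro i
  rw [Real.norm_eq_abs, ← Real.sqrt_sq_eq_abs]
  apply Real.sqrt_le_sqrt
  exact Finset.single_le_sum (f := fun j => w j * w j)
    (fun j _ => mul_self_nonneg _) (Finset.mem_univ i) |>.trans_eq' (by ring_nf)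

lemma pos_dot (A : Matrix (Fin n) (Fin n) ℝ) (hA : A.PosDef) {w : Fin n → ℝ} (hw : w ≠ 0) :
    0 < w ⬝ᵥ A.mulVec w := by simpa using hA.dotProduct_mulVec_pos hw

lemma exists_coercive (hn : 1 ≤ n) (A : Matrix (Fin n) (Fin n) ℝ) (hA : A.PosDef) :
    ∃ c : ℝ, 0 < c ∧ ∀ w : Fin n → ℝ, c * (w ⬝ᵥ w) ≤ w ⬝ᵥ A.mulVec w := by
  classical
  set S : Set (Fin n → ℝ) := {w | w ⬝ᵥ w = 1} with hS
  have hclosed : IsClosed S := isClosed_eq continuous_dot_self continuous_const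
  have hsub : S ⊆ Metric.closedBall 0 1 := by
    intro w hw
    simp only [Metric.mem_closedBall, dist_zero_right]
    calc ‖w‖ ≤ Real.sqrt (w ⬝ᵥ w) := norm_le_sqrt_dot w
    _ = 1 := by rw [hw]; simp
  have hcpt : IsCompact S :=
    (isCompact_closedBall (0 : Fin n → ℝ) 1).of_isClosed_subset hclosed hsub
  have hne : S.Nonempty := by
    refine ⟨Pi.single ⟨0, hn⟩ 1, ?_⟩
    simp [hS, dotProduct_single]
  obtain ⟨u, huS, humin'⟩ := hcpt.exists_isMinOn hne (continuous_quad A).continuousOn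
  have humin := isMinOn_iff.mp humin'
  have hune : u ≠ 0 := by
    intro h; rw [h] at huS; simp [hS, zero_dotProduct] at huS
  refine ⟨u ⬝ᵥ A.mulVec u, pos_dot A hA hune, fun w => ?_⟩
  by_cases hw : w = 0
  · simp [hw]
  · have hpos : 0 < w ⬝ᵥ w := dot_self_pos hw
    set r := Real.sqrt (w ⬝ᵥ w) with hr
    have hrpos : 0 < r := Real.sqrt_pos.mpr hpos
    have hrsq : r ^ 2 = w ⬝ᵥ w := Real.sq_sqrt hpos.le
    have hmem : (r⁻¹ • w) ∈ S := by
      simp only [hS, Set.mem_setOf_eq, smul_dotProduct, dotProduct_smul,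
        smul_eq_mul]
      field_simp
      nlinarith [hrsq]
    have hr2pos : 0 < r ^ 2 := by positivity
    have expand : (r⁻¹ • w) ⬝ᵥ A.mulVec (r⁻¹ • w) = (w ⬝ᵥ A.mulVec w) / r ^ 2 := by
      simp only [smul_dotProduct, dotProduct_smul, Matrix.mulVec_smul,
        smul_eq_mul]
      rw [eq_div_iff hr2pos.ne']
      field_simp
    have h3 := (le_div_iff₀ hr2pos).mp ((humin _ hmem).trans_eq expand)
    rw [← hrsq]
    exact h3

lemma quad_midpoint (M : Matrix (Fin n) (Fin n) ℝ) (hM : Mᵀ = M) (a b : Fin n → ℝ) :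
    ((1/2 : ℝ) • (a + b)) ⬝ᵥ M.mulVec ((1/2 : ℝ) • (a + b))
      = (a ⬝ᵥ M.mulVec a + b ⬝ᵥ M.mulVec b) / 2
        - (1/4) * ((a - b) ⬝ᵥ M.mulVec (a - b)) := by
  have h := dot_sym M hM a b
  simp only [Matrix.mulVec_add, Matrix.mulVec_smul, Matrix.mulVec_sub, dotProduct_add,
    add_dotProduct, dotProduct_smul, smul_dotProduct,
    dotProduct_sub, sub_dotProduct, smul_eq_mul, h]
  ring

lemma gCon_midpoint (A : Matrix (Fin n) (Fin n) ℝ) (hAs : Aᵀ = A) (v a b : Fin n → ℝ) :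
    gCon A v ((1/2 : ℝ) • (a + b))
      = (gCon A v a + gCon A v b) / 2 - (1/4) * ((a - b) ⬝ᵥ A.mulVec (a - b)) := by
  have hz : (1/2 : ℝ) • (a + b) - v = (1/2 : ℝ) • ((a - v) + (b - v)) := by
    funext i
    simp only [Pi.smul_apply, Pi.sub_apply, Pi.add_apply, smul_eq_mul]
    ring
  have hd : (a - v) - (b - v) = a - b := by abel
  simp only [gCon]
  rw [hz, quad_midpoint A hAs (a - v) (b - v), hd]

lemma fObj_midpoint (Q : Matrix (Fin n) (Fin n) ℝ) (q : Fin n → ℝ) (hQs : Qᵀ = Q)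
    (hQ : Q.PosSemidef) (a b : Fin n → ℝ) :
    fObj Q q ((1/2 : ℝ) • (a + b)) ≤ (fObj Q q a + fObj Q q b) / 2 := by
  have hnn : 0 ≤ (a - b) ⬝ᵥ Q.mulVec (a - b) := by simpa using hQ.dotProduct_mulVec_nonneg (a - b)
  simp only [fObj]
  rw [quad_midpoint Q hQs a b]
  have hq : q ⬝ᵥ ((1/2 : ℝ) • (a + b)) = (q ⬝ᵥ a + q ⬝ᵥ b) / 2 := by
    simp only [dotProduct_smul, dotProduct_add, smul_eq_mul]
    ring
  rw [hq]
  linarith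

end AuxConv

/-- With `m > 0` and Requirement 1, the sequence of auxiliary minimizers
`x_k*` converges to `x*`, the unique minimizer of `g` over the set `X*` of minimizers
of `f` over `C`, i.e. `‖x_k* − x*‖ → 0` as `k → ∞`. -/
theorem auxiliary_minimizers_converge {n : ℕ} (hn : 1 ≤ n)
    (Q A : Matrix (Fin n) (Fin n) ℝ) (q v : Fin n → ℝ)
    (hQ : Q.PosSemidef) (hA : A.PosDef) (m : ℝ) (hm : 0 < m)
    (hreq1 : Req1 Q q A v m)
    (xstar : Fin n → ℝ)
    (hxstar_mem : gCon A v xstar ≤ 1 ∧ ∀ y : Fin n → ℝ, gCon A v y ≤ 1 → fObj Q q xstar ≤ fObj Q q y)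
    (hxstar_g : ∀ y : Fin n → ℝ,
      (gCon A v y ≤ 1 ∧ ∀ z : Fin n → ℝ, gCon A v z ≤ 1 → fObj Q q y ≤ fObj Q q z) →
      gCon A v xstar ≤ gCon A v y)
    (xks : ℕ → (Fin n → ℝ))
    (hmin : ∀ k : ℕ, 1 ≤ k →
      ∀ x : Fin n → ℝ, Jaux Q q A v m k (xks k) ≤ Jaux Q q A v m k x) :
    Filter.Tendsto (fun k : ℕ => _root_.enorm (xks k - xstar)) Filter.atTop (nhds 0) := by
  classical
  have hAs : Aᵀ = A := by have h := hA.1; simp at h; exact h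
  have hQs : Qᵀ = Q := by have h := hQ.1; simp at h; exact h
  have hgcont := AuxConv.continuous_gCon A v
  have hfcont := AuxConv.continuous_fObj Q q
  have hg0 : ∀ x : Fin n → ℝ, 0 ≤ gCon A v x := by
    intro x
    simpa [gCon] using hA.posSemidef.dotProduct_mulVec_nonneg (x - v)
  -- Claim 1 : feasibility for k ≥ 2
  have claim1 : ∀ k : ℕ, 2 ≤ k → gCon A v (xks k) ≤ 1 := fun k hk =>
    AuxConv.feasible Q A q v hQs hAs hA m hm hreq1 k hk (xks k) (hmin k (by omega))
  -- Claim 2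
  have claim2a : ∀ k : ℕ, 2 ≤ k → gCon A v (xks k) ≤ gCon A v xstar := by
    intro k hk
    have hJ := hmin k (by omega) xstar
    have hf := hxstar_mem.2 (xks k) (claim1 k hk)
    simp only [Jaux, pPen] at hJ
    have hmk : 0 < m / (k : ℝ) := div_pos hm (by exact_mod_cast Nat.lt_of_lt_of_le Nat.zero_lt_two hk)
    have h' : (m / (k:ℝ)) * (gCon A v (xks k)) ^ k ≤ (m / (k:ℝ)) * (gCon A v xstar) ^ k := by
      linarith
    exact le_of_pow_le_pow_left₀ (by omega) (hg0 xstar) (le_of_mul_le_mul_left h' hmk)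
  have claim2b : ∀ k : ℕ, 2 ≤ k → fObj Q q (xks k) ≤ fObj Q q xstar + m / (k : ℝ) := by
    intro k hk
    have hJ := hmin k (by omega) xstar
    simp only [Jaux, pPen] at hJ
    have hmk : 0 < m / (k : ℝ) := div_pos hm (by exact_mod_cast Nat.lt_of_lt_of_le Nat.zero_lt_two hk)
    have h1 : 0 ≤ (gCon A v (xks k)) ^ k := pow_nonneg (hg0 _) k
    have h2 : (gCon A v xstar) ^ k ≤ 1 := pow_le_one₀ (hg0 _) hxstar_mem.1
    nlinarith [mul_nonneg hmk.le h1, mul_le_mul_of_nonneg_left h2 hmk.le]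
  -- compact set
  obtain ⟨c0, hc0pos, hcoer⟩ := AuxConv.exists_coercive hn A hA
  have hKc : IsCompact {x : Fin n → ℝ | gCon A v x ≤ 1} := by
    have hclosed : IsClosed {x : Fin n → ℝ | gCon A v x ≤ 1} :=
      isClosed_le hgcont continuous_const
    have hsub : {x : Fin n → ℝ | gCon A v x ≤ 1} ⊆
        Metric.closedBall v (Real.sqrt (1 / c0)) := by
      intro x hx
      simp only [Metric.mem_closedBall]
      rw [dist_eq_norm]
      calc ‖x - v‖ ≤ Real.sqrt ((x - v) ⬝ᵥ (x - v)) := AuxConv.norm_le_sqrt_dot _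
      _ ≤ Real.sqrt (1 / c0) := by
          apply Real.sqrt_le_sqrt
          rw [le_div_iff₀ hc0pos]
          have h := hcoer (x - v)
          have hx' : gCon A v x ≤ 1 := hx
          simp only [gCon] at hx'
          nlinarith [h, hx']
    exact (isCompact_closedBall v _).of_isClosed_subset hclosed hsub
  -- convergence of the sequence itself
  have htends : Tendsto xks atTop (nhds xstar) := by
    apply tendsto_of_subseq_tendsto
    intro ns hns
    have hev : ∀ᶠ j in atTop, xks (ns j) ∈ {x : Fin n → ℝ | gCon A v x ≤ 1} := by
      filter_upwards [hns.eventually (eventually_ge_atTop 2)] with j hj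
      exact claim1 (ns j) hj
    obtain ⟨y, hyK, φ, hφ, hconv⟩ := hKc.tendsto_subseq' hev.frequently
    refine ⟨φ, ?_⟩
    have hkφ : Tendsto (fun j => ns (φ j)) atTop atTop := hns.comp hφ.tendsto_atTop
    have hev2 : ∀ᶠ j in atTop, 2 ≤ ns (φ j) := hkφ.eventually (eventually_ge_atTop 2)
    have hgy : gCon A v y ≤ gCon A v xstar := by
      have hgt : Tendsto (fun j => gCon A v (xks (ns (φ j)))) atTop (nhds (gCon A v y)) :=
        (hgcont.tendsto y).comp hconv
      exact le_of_tendsto hgt (hev2.mono fun j hj => claim2a _ hj)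
    have hfy : fObj Q q y ≤ fObj Q q xstar := by
      have hft : Tendsto (fun j => fObj Q q (xks (ns (φ j)))) atTop (nhds (fObj Q q y)) :=
        (hfcont.tendsto y).comp hconv
      have hrt : Tendsto (fun j => fObj Q q xstar + m / ((ns (φ j) : ℝ))) atTop
          (nhds (fObj Q q xstar + 0)) :=
        tendsto_const_nhds.add
          (Tendsto.div_atTop tendsto_const_nhds (tendsto_natCast_atTop_atTop.comp hkφ))
      have := le_of_tendsto_of_tendsto hft hrt (hev2.mono fun j hj => claim2b _ hj)
      simpa using this
    have hy1 : gCon A v y ≤ 1 := le_trans hgy hxstar_mem.1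
    have hymin : ∀ z : Fin n → ℝ, gCon A v z ≤ 1 → fObj Q q y ≤ fObj Q q z :=
      fun z hz => le_trans hfy (hxstar_mem.2 z hz)
    have hgys : gCon A v xstar ≤ gCon A v y := hxstar_g y ⟨hy1, hymin⟩
    have hgz := AuxConv.gCon_midpoint A hAs v y xstar
    have hΔnn : 0 ≤ (y - xstar) ⬝ᵥ A.mulVec (y - xstar) := by
      simpa using hA.posSemidef.dotProduct_mulVec_nonneg (y - xstar)
    have hz1 : gCon A v ((1/2 : ℝ) • (y + xstar)) ≤ 1 := by
      rw [hgz]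
      linarith [hxstar_mem.1]
    have hfz : fObj Q q ((1/2 : ℝ) • (y + xstar)) ≤ fObj Q q xstar := by
      have := AuxConv.fObj_midpoint Q q hQs hQ y xstar
      linarith
    have hzmin : ∀ u : Fin n → ℝ, gCon A v u ≤ 1 →
        fObj Q q ((1/2 : ℝ) • (y + xstar)) ≤ fObj Q q u :=
      fun u hu => le_trans hfz (hxstar_mem.2 u hu)
    have hgzs := hxstar_g _ ⟨hz1, hzmin⟩
    rw [hgz] at hgzs
    have hΔ : (y - xstar) ⬝ᵥ A.mulVec (y - xstar) ≤ 0 := by linarith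
    have hy : y = xstar := by
      by_contra hne
      have h1 : y - xstar ≠ 0 := sub_ne_zero.mpr hne
      have h2 := AuxConv.pos_dot A hA h1
      linarith
    rw [← hy]
    exact hconv
  -- conclude via continuity of the norm expression
  have hencont : Continuous fun w : Fin n → ℝ => Real.sqrt ((w - xstar) ⬝ᵥ (w - xstar)) :=
    Real.continuous_sqrt.comp
      ((AuxConv.continuous_dot_self).comp (continuous_id.sub continuous_const))
  have hfin := (hencont.tendsto xstar).comp htends
  simp only [sub_self, zero_dotProduct, Real.sqrt_zero] at hfin
  exact hfin
end

section
/- For every integer k ≥ 1, every parameter m ≥ 0, every x in the feasible set C, and every direction h ∈ ℝⁿ, the Hessian of J_k at x satisfies hᵀ∇²J_k(x)h ≤ L_k‖h‖², where L_k = λ_max(Q + m(4k−2)A). In other words, J_k is L_k-smooth on C. -/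
open Matrix Filter

/-- The Hessian matrix of `J_k` at `x`:
`∇²J_k(x) = Q + m(k−1)g(x)^{k−2} ∇g(x)∇g(x)ᵀ + m g(x)^{k−1} · 2A`. -/
noncomputable def HessJ {n : ℕ} (Q A : Matrix (Fin n) (Fin n) ℝ) (v : Fin n → ℝ)
    (m : ℝ) (k : ℕ) (x : Fin n → ℝ) : Matrix (Fin n) (Fin n) ℝ :=
  Q + (m * ((k : ℝ) - 1) * gCon A v x ^ (k - 2)) • Matrix.vecMulVec (gradG A v x) (gradG A v x)
    + (m * gCon A v x ^ (k - 1)) • ((2 : ℝ) • A)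

lemma eigset_eq' {n : ℕ} (M : Matrix (Fin n) (Fin n) ℝ) :
    {μ : ℝ | Module.End.HasEigenvalue (Matrix.toLin' M) μ} = spectrum ℝ M := by
  ext μ
  rw [Set.mem_setOf_eq, Module.End.hasEigenvalue_iff_mem_spectrum]
  have : (Matrix.toLin' M : (Fin n → ℝ) →ₗ[ℝ] Fin n → ℝ) = Matrix.toLinAlgEquiv' M := rfl
  rw [this, AlgEquiv.spectrum_eq]

lemma eigenvalue_le_lambdaMax' {n : ℕ} {M : Matrix (Fin n) (Fin n) ℝ} (hM : M.IsHermitian)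
    (i : Fin n) : hM.eigenvalues i ≤ lambdaMax M := by
  apply le_csSup
  · rw [eigset_eq']; exact (Matrix.finite_spectrum M).bddAbove
  · rw [eigset_eq']; exact hM.eigenvalues_mem_spectrum_real i

lemma dotProduct_sum' {n : ℕ} (y : Fin n → ℝ) (f : Fin n → Fin n → ℝ) :
    y ⬝ᵥ (∑ i, f i) = ∑ i, y ⬝ᵥ f i := by
  simp only [dotProduct, Finset.sum_apply, Finset.mul_sum]
  exact Finset.sum_comm

lemma rayleigh_le' {n : ℕ} {M : Matrix (Fin n) (Fin n) ℝ} (hM : M.IsHermitian) (h : Fin n → ℝ) :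
    h ⬝ᵥ M.mulVec h ≤ lambdaMax M * (h ⬝ᵥ h) := by
  set b := hM.eigenvectorBasis with hb
  set h' : EuclideanSpace ℝ (Fin n) := WithLp.toLp 2 h with hh'
  set c : Fin n → ℝ := fun i => b.repr h' i with hc
  have hrep : ∑ i, c i • (b i : Fin n → ℝ) = h := by
    have := congrArg WithLp.ofLp (b.sum_repr h')
    simpa [c, h', WithLp.ofLp_sum, WithLp.ofLp_smul] using this
  have hbih : ∀ i, (h ⬝ᵥ (b i : Fin n → ℝ)) = c i := by
    intro i
    show h ⬝ᵥ (b i : Fin n → ℝ) = b.repr h' i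
    rw [b.repr_apply_apply h' i, real_inner_comm]
    simp [PiLp.inner_apply, dotProduct, RCLike.inner_apply, hh', mul_comm]
  have hMv : M.mulVec h = ∑ i, (c i * hM.eigenvalues i) • (b i : Fin n → ℝ) := by
    conv_lhs => rw [← hrep, ← Matrix.mulVecLin_apply]
    rw [map_sum]
    refine Finset.sum_congr rfl fun i _ => ?_
    rw [LinearMap.map_smul, Matrix.mulVecLin_apply]
    erw [hM.mulVec_eigenvectorBasis]
    rw [smul_smul]
  have key : h ⬝ᵥ M.mulVec h = ∑ i, hM.eigenvalues i * c i ^ 2 := by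
    rw [hMv, dotProduct_sum']
    refine Finset.sum_congr rfl fun i _ => ?_
    rw [dotProduct_smul, smul_eq_mul, hbih]
    ring
  have key2 : h ⬝ᵥ h = ∑ i, c i ^ 2 := by
    conv_lhs => rw [show h ⬝ᵥ h = h ⬝ᵥ (∑ i, c i • (b i : Fin n → ℝ)) by rw [hrep], dotProduct_sum']
    refine Finset.sum_congr rfl fun i _ => ?_
    rw [dotProduct_smul, smul_eq_mul, hbih]
    ring
  rw [key, key2, Finset.mul_sum]
  apply Finset.sum_le_sum
  intro i _
  have := eigenvalue_le_lambdaMax' hM i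
  nlinarith [sq_nonneg (c i)]

lemma psd_cauchy_schwarz {n : ℕ} {A : Matrix (Fin n) (Fin n) ℝ} (hA : A.PosSemidef)
    (u w : Fin n → ℝ) :
    (u ⬝ᵥ A.mulVec w) ^ 2 ≤ (u ⬝ᵥ A.mulVec u) * (w ⬝ᵥ A.mulVec w) := by
  obtain ⟨B, rfl⟩ : ∃ B : Matrix (Fin n) (Fin n) ℝ, A = Bᴴ * B := by
    open scoped MatrixOrder Matrix.Norms.L2Operator in
    exact CStarAlgebra.nonneg_iff_eq_star_mul_self.mp hA.nonneg
  have hBt : (Bᴴ : Matrix (Fin n) (Fin n) ℝ) = Bᵀ := Matrix.conjTranspose_eq_transpose_of_trivial B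
  rw [hBt]
  have key : ∀ a b : Fin n → ℝ, a ⬝ᵥ (Bᵀ * B).mulVec b = (B.mulVec a) ⬝ᵥ (B.mulVec b) := by
    intro a b
    rw [← Matrix.mulVec_mulVec, Matrix.dotProduct_mulVec, Matrix.vecMul_transpose]
  rw [key, key, key]
  have := Finset.sum_mul_sq_le_sq_mul_sq Finset.univ (B.mulVec u) (B.mulVec w)
  simpa [dotProduct, pow_two, mul_comm, mul_assoc, mul_left_comm] using this

lemma vecMulVec_quadratic {n : ℕ} (w y : Fin n → ℝ) :
    y ⬝ᵥ (Matrix.vecMulVec w w).mulVec y = (w ⬝ᵥ y) ^ 2 := by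
  simp only [Matrix.mulVec, Matrix.vecMulVec_apply, dotProduct]
  rw [sq, Finset.sum_mul_sum]
  refine Finset.sum_congr rfl fun i _ => ?_
  rw [Finset.mul_sum]
  refine Finset.sum_congr rfl fun j _ => ?_
  ring

/-- For every `k ≥ 1`, `m ≥ 0`, `x ∈ C`, and direction `h`, the Hessian of
`J_k` at `x` satisfies `hᵀ ∇²J_k(x) h ≤ L_k ‖h‖²` with `L_k = λ_max(Q + m(4k−2)A)`;
i.e. `J_k` is `L_k`-smooth on `C`. -/
theorem auxiliary_cost_Lsmooth {n : ℕ} (hn : 1 ≤ n)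
    (Q A : Matrix (Fin n) (Fin n) ℝ) (q v : Fin n → ℝ)
    (hQ : Q.PosSemidef) (hA : A.PosDef) (m : ℝ) (hm : 0 ≤ m) (k : ℕ) (hk : 1 ≤ k)
    (x : Fin n → ℝ) (hx : gCon A v x ≤ 1) :
    ∀ h : Fin n → ℝ, h ⬝ᵥ (HessJ Q A v m k x).mulVec h ≤ Lsmooth Q A m k * (h ⬝ᵥ h) := by
  intro h
  set u : Fin n → ℝ := x - v with hu
  set g : ℝ := gCon A v x with hg
  have hAt : Aᵀ = A := by
    have := hA.posSemidef.1
    rwa [Matrix.IsHermitian, Matrix.conjTranspose_eq_transpose_of_trivial] at this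
  have hg0 : 0 ≤ g := by
    have := hA.posSemidef.dotProduct_mulVec_nonneg u
    simp only [star_trivial] at this; exact this
  have hah : 0 ≤ h ⬝ᵥ A.mulVec h := by
    have := hA.posSemidef.dotProduct_mulVec_nonneg h
    simpa only [star_trivial] using this
  have hsym : ∀ a b : Fin n → ℝ, (A.mulVec a) ⬝ᵥ b = a ⬝ᵥ (A.mulVec b) := by
    intro a b
    rw [dotProduct_comm, Matrix.dotProduct_mulVec, ← Matrix.mulVec_transpose, hAt,
      dotProduct_comm]
  set d : ℝ := u ⬝ᵥ A.mulVec h with hd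
  have hwh : gradG A v x ⬝ᵥ h = 2 * d := by
    rw [gradG, smul_dotProduct, smul_eq_mul, hsym u h, hd]
  have hcs : d ^ 2 ≤ g * (h ⬝ᵥ A.mulVec h) :=
    psd_cauchy_schwarz hA.posSemidef u h
  -- Expansion of the quadratic form of the Hessian
  have hexp : h ⬝ᵥ (HessJ Q A v m k x).mulVec h
      = h ⬝ᵥ Q.mulVec h + (m * ((k : ℝ) - 1) * g ^ (k - 2)) * (2 * d) ^ 2
        + (m * g ^ (k - 1)) * (2 * (h ⬝ᵥ A.mulVec h)) := by
    rw [HessJ, ← hg]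
    rw [Matrix.add_mulVec, Matrix.add_mulVec, dotProduct_add, dotProduct_add,
      Matrix.smul_mulVec, Matrix.smul_mulVec, dotProduct_smul, dotProduct_smul,
      smul_eq_mul, smul_eq_mul, vecMulVec_quadratic, hwh,
      Matrix.smul_mulVec, dotProduct_smul, smul_eq_mul]
  have hbound : h ⬝ᵥ (HessJ Q A v m k x).mulVec h
      ≤ h ⬝ᵥ Q.mulVec h + (m * (4 * (k : ℝ) - 2)) * (h ⬝ᵥ A.mulVec h) := by
    rw [hexp]
    rcases eq_or_lt_of_le hk with hk1 | hk2
    · -- k = 1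
      have : k = 1 := hk1.symm
      subst this
      simp only [Nat.cast_one, show (1:ℕ) - 1 = 0 from rfl, show (1:ℕ) - 2 = 0 from rfl, pow_zero]
      nlinarith
    · -- k ≥ 2
      have hk2' : 2 ≤ k := hk2
      have hke : (k - 2) + 1 = k - 1 := by omega
      have hgpow : g ^ (k - 2) * g = g ^ (k - 1) := by
        rw [← pow_succ, hke]
      have hgp1 : g ^ (k - 1) ≤ 1 := pow_le_one₀ hg0 hx
      have hgp1' : 0 ≤ g ^ (k - 1) := pow_nonneg hg0 _
      have hgp2' : 0 ≤ g ^ (k - 2) := pow_nonneg hg0 _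
      have hkR : (1 : ℝ) ≤ (k : ℝ) := by exact_mod_cast hk
      have h1 : (m * ((k : ℝ) - 1) * g ^ (k - 2)) * (2 * d) ^ 2
          ≤ 4 * m * ((k : ℝ) - 1) * (h ⬝ᵥ A.mulVec h) := by
        have e1 : (m * ((k : ℝ) - 1) * g ^ (k - 2)) * (2 * d) ^ 2
            = 4 * (m * ((k : ℝ) - 1)) * (g ^ (k - 2) * d ^ 2) := by ring
        have e2 : g ^ (k - 2) * d ^ 2 ≤ g ^ (k - 1) * (h ⬝ᵥ A.mulVec h) := by
          calc g ^ (k - 2) * d ^ 2 ≤ g ^ (k - 2) * (g * (h ⬝ᵥ A.mulVec h)) :=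
                mul_le_mul_of_nonneg_left hcs hgp2'
            _ = g ^ (k - 1) * (h ⬝ᵥ A.mulVec h) := by rw [← hgpow]; ring
        have e3 : g ^ (k - 1) * (h ⬝ᵥ A.mulVec h) ≤ h ⬝ᵥ A.mulVec h := by
          nlinarith
        have hmk : 0 ≤ m * ((k : ℝ) - 1) := mul_nonneg hm (by linarith)
        rw [e1]
        calc 4 * (m * ((k : ℝ) - 1)) * (g ^ (k - 2) * d ^ 2)
            ≤ 4 * (m * ((k : ℝ) - 1)) * (h ⬝ᵥ A.mulVec h) := by
              apply mul_le_mul_of_nonneg_left _ (by linarith)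
              exact le_trans e2 e3
          _ = 4 * m * ((k : ℝ) - 1) * (h ⬝ᵥ A.mulVec h) := by ring
      have h2 : (m * g ^ (k - 1)) * (2 * (h ⬝ᵥ A.mulVec h)) ≤ 2 * m * (h ⬝ᵥ A.mulVec h) := by
        nlinarith [mul_nonneg hm hah, mul_le_mul_of_nonneg_right hgp1 (mul_nonneg hm hah)]
      nlinarith
  have hherm : (Q + (m * (4 * (k : ℝ) - 2)) • A).IsHermitian := by
    have h1 : Q.IsHermitian := hQ.1
    have h2 : A.IsHermitian := hA.posSemidef.1
    rw [Matrix.IsHermitian] at h1 h2 ⊢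
    rw [Matrix.conjTranspose_add, Matrix.conjTranspose_smul, h1, h2, star_trivial]
  have hfinal : h ⬝ᵥ Q.mulVec h + (m * (4 * (k : ℝ) - 2)) * (h ⬝ᵥ A.mulVec h)
      = h ⬝ᵥ (Q + (m * (4 * (k : ℝ) - 2)) • A).mulVec h := by
    rw [Matrix.add_mulVec, dotProduct_add, Matrix.smul_mulVec, dotProduct_smul,
      smul_eq_mul]
  calc h ⬝ᵥ (HessJ Q A v m k x).mulVec h
      ≤ h ⬝ᵥ Q.mulVec h + (m * (4 * (k : ℝ) - 2)) * (h ⬝ᵥ A.mulVec h) := hbound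
    _ = h ⬝ᵥ (Q + (m * (4 * (k : ℝ) - 2)) • A).mulVec h := hfinal
    _ ≤ Lsmooth Q A m k * (h ⬝ᵥ h) := rayleigh_le' hherm h
end

section
/- Let A be a symmetric positive definite real n×n matrix, v ∈ ℝⁿ, g(x) = (x−v)ᵀA(x−v), C = {x : g(x) ≤ 1}, and r = √(λ_min(A))/λ_max(A). For every x with g(x) = 1, the closed ball of radius r centered at x − r·A(x−v)/‖A(x−v)‖ (i.e., tangent to the ellipsoid C at x from the inside) is contained in C. -/
open Matrix

section Helpers
open Module.End

lemma inner_eq_dot {n : ℕ} (a b : EuclideanSpace ℝ (Fin n)) :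
    (inner ℝ a b : ℝ) = a ⬝ᵥ b := by
  simp [PiLp.inner_apply, dotProduct, mul_comm]

lemma norm_sq_eq_dot {n : ℕ} (a : EuclideanSpace ℝ (Fin n)) :
    ‖a‖ ^ 2 = a ⬝ᵥ a := by
  rw [← real_inner_self_eq_norm_sq, inner_eq_dot]

lemma spectral {n : ℕ} (hn : 1 ≤ n) (A : Matrix (Fin n) (Fin n) ℝ) (hA : A.PosDef) :
    0 < lambdaMin A ∧ lambdaMin A ≤ lambdaMax A ∧
    (∀ z : Fin n → ℝ, lambdaMin A * (z ⬝ᵥ z) ≤ z ⬝ᵥ A.mulVec z) ∧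
    (∀ z : Fin n → ℝ, z ⬝ᵥ A.mulVec z ≤ lambdaMax A * (z ⬝ᵥ z)) := by
  set E := EuclideanSpace ℝ (Fin n)
  set T : E →ₗ[ℝ] E := Matrix.toEuclideanLin A with hTdef
  have hT : T.IsSymmetric := Matrix.isHermitian_iff_isSymmetric.1 hA.1
  haveI : Nontrivial E := by
    refine ⟨0, EuclideanSpace.single ⟨0, hn⟩ 1, fun h => ?_⟩
    have h2 : (0:ℝ) = EuclideanSpace.single (⟨0, hn⟩ : Fin n) (1:ℝ) ⟨0, hn⟩ :=
      congrArg (fun w : E => w ⟨0, hn⟩) h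
    rw [EuclideanSpace.single_apply] at h2
    simp at h2
  have hTz : ∀ z : E, T z ⬝ᵥ z = z ⬝ᵥ A.mulVec z := by
    intro z
    have : T z = A.mulVec z := rfl
    rw [this, dotProduct_comm]
  -- boundedness of the Rayleigh quotient
  set C : ℝ := ‖LinearMap.toContinuousLinearMap T‖ with hC
  set f : {x : E // x ≠ 0} → ℝ :=
    fun x => RCLike.re (inner ℝ (T x) (x : E) : ℝ) / ‖(x : E)‖ ^ 2 with hf
  have hfval : ∀ x : {x : E // x ≠ 0}, f x = (T x ⬝ᵥ (x : E)) / ‖(x : E)‖ ^ 2 := by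
    intro x; simp only [hf]
    rw [RCLike.re_to_real, inner_eq_dot]
  have hnorm : ∀ x : {x : E // x ≠ 0}, (0:ℝ) < ‖(x : E)‖ ^ 2 := fun x =>
    pow_pos (norm_pos_iff.2 x.2) 2
  have hboundabs : ∀ x : {x : E // x ≠ 0}, |f x| ≤ C := by
    intro x
    rw [hfval, abs_div, abs_of_pos (hnorm x), div_le_iff₀ (hnorm x)]
    calc |T x ⬝ᵥ (x : E)| = |(inner ℝ (T x) (x : E) : ℝ)| := by rw [inner_eq_dot]
      _ ≤ ‖T ↑x‖ * ‖(x : E)‖ := abs_real_inner_le_norm _ _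
      _ ≤ (C * ‖(x : E)‖) * ‖(x : E)‖ := by
          gcongr
          exact (LinearMap.toContinuousLinearMap T).le_opNorm _
      _ = C * ‖(x : E)‖ ^ 2 := by ring
  have hbddA : BddAbove (Set.range f) := by
    refine ⟨C, fun y hy => ?_⟩
    obtain ⟨x, rfl⟩ := hy
    exact (abs_le.1 (hboundabs x)).2
  have hbddB : BddBelow (Set.range f) := by
    refine ⟨-C, fun y hy => ?_⟩
    obtain ⟨x, rfl⟩ := hy
    exact (abs_le.1 (hboundabs x)).1
  set M : ℝ := ⨆ x : {x : E // x ≠ 0}, f x with hM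
  set m : ℝ := ⨅ x : {x : E // x ≠ 0}, f x with hm
  have hMeig : HasEigenvalue T M := hT.hasEigenvalue_iSup_of_finiteDimensional
  have hmeig : HasEigenvalue T m := hT.hasEigenvalue_iInf_of_finiteDimensional
  have key : ∀ μ : ℝ, HasEigenvalue T μ → m ≤ μ ∧ μ ≤ M := by
    intro μ hμ
    obtain ⟨u, hu⟩ := hμ.exists_hasEigenvector
    have huf : f ⟨u, hu.2⟩ = μ := by
      rw [hfval]
      simp only [hu.apply_eq_smul]
      rw [WithLp.ofLp_smul, smul_dotProduct, ← norm_sq_eq_dot, smul_eq_mul,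
        mul_div_assoc, div_self (ne_of_gt (hnorm ⟨u, hu.2⟩)), mul_one]
    constructor
    · rw [← huf]; exact ciInf_le hbddB _
    · rw [← huf]; exact le_ciSup hbddA _
  have hiff : ∀ μ, μ ∈ {μ : ℝ | HasEigenvalue (Matrix.toLin' A) μ} ↔ HasEigenvalue T μ := by
    intro μ
    constructor
    · intro h
      obtain ⟨u, hu⟩ := Module.End.HasEigenvalue.exists_hasEigenvector h
      refine hasEigenvalue_of_hasEigenvector (x := WithLp.toLp 2 u) ⟨?_, fun h => hu.2 (by simpa using congrArg WithLp.ofLp h)⟩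
      rw [mem_eigenspace_iff]
      rw [hTdef, toEuclideanLin_toLp, mem_eigenspace_iff.1 hu.1]; rfl
    · intro h
      show HasEigenvalue (Matrix.toLin' A) μ
      obtain ⟨u, hu⟩ := h.exists_hasEigenvector
      refine hasEigenvalue_of_hasEigenvector (x := WithLp.ofLp u) ⟨?_, by simpa using hu.2⟩
      rw [mem_eigenspace_iff]
      have := congrArg WithLp.ofLp (mem_eigenspace_iff.1 hu.1)
      rw [hTdef, piLp_ofLp_toEuclideanLin] at this
      simpa using this
  have hSmax : lambdaMax A = M := by
    apply le_antisymm
    · exact csSup_le ⟨M, (hiff M).2 hMeig⟩ (fun μ hμ => (key μ ((hiff μ).1 hμ)).2)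
    · exact le_csSup ⟨M, fun μ hμ => (key μ ((hiff μ).1 hμ)).2⟩ ((hiff M).2 hMeig)
  have hSmin : lambdaMin A = m := by
    apply le_antisymm
    · exact csInf_le ⟨m, fun μ hμ => (key μ ((hiff μ).1 hμ)).1⟩ ((hiff m).2 hmeig)
    · exact le_csInf ⟨m, (hiff m).2 hmeig⟩ (fun μ hμ => (key μ ((hiff μ).1 hμ)).1)
  have hup : ∀ z : Fin n → ℝ, z ⬝ᵥ A.mulVec z ≤ M * (z ⬝ᵥ z) := by
    intro z
    by_cases hz : z = 0
    · simp [hz]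
    · have hz2 : ((WithLp.equiv 2 (Fin n → ℝ)).symm z) ≠ 0 := by simpa using hz
      set z' : E := (WithLp.equiv 2 (Fin n → ℝ)).symm z with hz'def
      have h1 : f ⟨z', hz2⟩ ≤ M := le_ciSup hbddA _
      rw [hfval, div_le_iff₀ (hnorm ⟨z', hz2⟩)] at h1
      rw [norm_sq_eq_dot] at h1
      exact le_of_le_of_eq (le_of_eq_of_le (hTz z').symm h1) rfl
  have hlo : ∀ z : Fin n → ℝ, m * (z ⬝ᵥ z) ≤ z ⬝ᵥ A.mulVec z := by
    intro z
    by_cases hz : z = 0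
    · simp [hz]
    · have hz2 : ((WithLp.equiv 2 (Fin n → ℝ)).symm z) ≠ 0 := by simpa using hz
      set z' : E := (WithLp.equiv 2 (Fin n → ℝ)).symm z with hz'def
      have h1 : m ≤ f ⟨z', hz2⟩ := ciInf_le hbddB _
      rw [hfval, le_div_iff₀ (hnorm ⟨z', hz2⟩)] at h1
      rw [norm_sq_eq_dot] at h1
      exact le_of_eq_of_le rfl (le_of_le_of_eq h1 (hTz z'))
  have hmpos : 0 < m := by
    obtain ⟨u, hu⟩ := hmeig.exists_hasEigenvector
    have hpos : 0 < (u : Fin n → ℝ) ⬝ᵥ A.mulVec u := by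
      have := hA.dotProduct_mulVec_pos (x := (u : Fin n → ℝ)) (by simpa using hu.2)
      simpa using this
    have huf : T u ⬝ᵥ (u : E) = m * ‖(u:E)‖^2 := by
      simp only [hu.apply_eq_smul]
      rw [WithLp.ofLp_smul, smul_dotProduct, ← norm_sq_eq_dot, smul_eq_mul]
    rw [hTz] at huf
    have h2 : 0 < ‖(u:E)‖^2 := pow_pos (norm_pos_iff.2 hu.2) 2
    nlinarith
  have hmM : m ≤ M := by
    obtain ⟨u, hu⟩ : ∃ u : E, u ≠ 0 := exists_ne 0
    exact le_trans (ciInf_le hbddB ⟨u, hu⟩) (le_ciSup hbddA ⟨u, hu⟩)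
  rw [hSmax, hSmin]
  exact ⟨hmpos, hmM, hlo, hup⟩

lemma dot_self_nonneg {n : ℕ} (a : Fin n → ℝ) : 0 ≤ a ⬝ᵥ a :=
  Finset.sum_nonneg fun i _ => mul_self_nonneg _

lemma dot_sq_le {n : ℕ} (a b : Fin n → ℝ) :
    (a ⬝ᵥ b) ^ 2 ≤ (a ⬝ᵥ a) * (b ⬝ᵥ b) := by
  have h := real_inner_mul_inner_self_le ((WithLp.equiv 2 (Fin n → ℝ)).symm a)
    ((WithLp.equiv 2 (Fin n → ℝ)).symm b)
  rw [inner_eq_dot, inner_eq_dot, inner_eq_dot] at h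
  calc (a ⬝ᵥ b) ^ 2 = (a ⬝ᵥ b) * (a ⬝ᵥ b) := by ring
    _ ≤ _ := h


end Helpers

/-- Euclidean norm of a vector in `ℝⁿ`. -/
noncomputable def eucNorm {n : ℕ} (w : Fin n → ℝ) : ℝ := Real.sqrt (w ⬝ᵥ w)

/-- For `A` symmetric positive definite, `g(x) = (x−v)ᵀA(x−v)`,
`C = {x : g(x) ≤ 1}` and `r = √(λ_min(A))/λ_max(A)`, for every boundary point `x`
(with `g(x) = 1`) the closed ball of radius `r` centered at
`x − r·A(x−v)/‖A(x−v)‖` (tangent to the ellipsoid at `x` from the inside)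
is contained in `C`. -/
theorem inner_tangent_ball_in_ellipsoid {n : ℕ} (hn : 1 ≤ n)
    (A : Matrix (Fin n) (Fin n) ℝ) (hA : A.PosDef) (v x : Fin n → ℝ)
    (hx : (x - v) ⬝ᵥ A.mulVec (x - v) = 1) :
    ∀ y : Fin n → ℝ,
      eucNorm (y - (x - (Real.sqrt (lambdaMin A) / lambdaMax A / eucNorm (A.mulVec (x - v))) •
        A.mulVec (x - v))) ≤ Real.sqrt (lambdaMin A) / lambdaMax A →
      (y - v) ⬝ᵥ A.mulVec (y - v) ≤ 1 := by
  obtain ⟨hlm, hmM, hlo, hup⟩ := spectral hn A hA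
  set lm := lambdaMin A
  set lM := lambdaMax A
  have hlM : 0 < lM := lt_of_lt_of_le hlm hmM
  set u : Fin n → ℝ := x - v with hu
  set w : Fin n → ℝ := A.mulVec u with hw
  set sl : ℝ := Real.sqrt lm with hsldef
  have hsl : 0 < sl := Real.sqrt_pos.2 hlm
  set r : ℝ := sl / lM with hr
  have hrpos : 0 < r := div_pos hsl hlM
  -- transpose symmetry
  have hAT : Aᵀ = A := by
    ext i j
    have := congrFun (congrFun hA.1 i) j
    simpa [Matrix.conjTranspose_apply] using this
  have hsym : ∀ a b : Fin n → ℝ, a ⬝ᵥ A.mulVec b = b ⬝ᵥ A.mulVec a := by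
    intro a b
    rw [Matrix.dotProduct_mulVec, ← Matrix.mulVec_transpose, hAT, dotProduct_comm]
  -- u nonzero facts
  have hu0 : u ≠ 0 := by
    intro h
    rw [h] at hx
    simp at hx
  have huu : 0 < u ⬝ᵥ u :=
    lt_of_le_of_ne (dot_self_nonneg u) (fun h => hu0 ((dotProduct_self_eq_zero).1 h.symm))
  -- ‖w‖² ≥ lm
  set W : ℝ := w ⬝ᵥ w with hWdef
  have hcs : 1 ≤ (u ⬝ᵥ u) * W := by
    have h1 : (u ⬝ᵥ w) = 1 := hx
    have := dot_sq_le u w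
    rw [h1] at this
    simpa using this
  have hlou : lm * (u ⬝ᵥ u) ≤ 1 := by
    have := hlo u
    calc lm * (u ⬝ᵥ u) ≤ u ⬝ᵥ A.mulVec u := this
      _ = 1 := hx
  have hWlm : lm ≤ W := by nlinarith
  have hWpos : 0 < W := lt_of_lt_of_le hlm hWlm
  set enw : ℝ := eucNorm w with henwdef
  have henw2 : enw ^ 2 = W := Real.sq_sqrt (dot_self_nonneg w)
  have henwge : sl ≤ enw := Real.sqrt_le_sqrt hWlm
  have henwpos : 0 < enw := lt_of_lt_of_le hsl henwge
  set c : ℝ := r / enw with hc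
  have hcpos : 0 < c := div_pos hrpos henwpos
  intro y hy
  set z : Fin n → ℝ := y - x with hz
  have hdeq : y - (x - c • w) = z + c • w := by rw [hz]; abel
  rw [hdeq] at hy
  -- expand the ball constraint
  set a : ℝ := z ⬝ᵥ z with ha
  set b : ℝ := z ⬝ᵥ w with hb
  have hdd : (z + c • w) ⬝ᵥ (z + c • w) = a + 2 * c * b + c ^ 2 * W := by
    simp only [add_dotProduct, dotProduct_add, smul_dotProduct, dotProduct_smul, smul_eq_mul,
      ← ha, ← hb, ← hWdef, dotProduct_comm w z, ← hb]
    ring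
  have hddle : (z + c • w) ⬝ᵥ (z + c • w) ≤ r ^ 2 := by
    have h0 : 0 ≤ (z + c • w) ⬝ᵥ (z + c • w) := dot_self_nonneg _
    have : (z + c • w) ⬝ᵥ (z + c • w) = (eucNorm (z + c • w)) ^ 2 :=
      (Real.sq_sqrt h0).symm
    rw [this]
    exact pow_le_pow_left₀ (Real.sqrt_nonneg _) hy 2
  have hc2W : c ^ 2 * W = r ^ 2 := by
    rw [hc, ← henw2]
    field_simp
  have h1 : a + 2 * c * b ≤ 0 := by
    rw [hdd, hc2W] at hddle
    linarith
  -- expand the goal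
  have hyv : y - v = u + z := by rw [hu, hz]; abel
  have hg : (y - v) ⬝ᵥ A.mulVec (y - v) = 1 + 2 * b + z ⬝ᵥ A.mulVec z := by
    rw [hyv, Matrix.mulVec_add, dotProduct_add, add_dotProduct, add_dotProduct]
    rw [hsym u z]
    rw [show u ⬝ᵥ A.mulVec u = 1 from hx]
    rw [show z ⬝ᵥ A.mulVec u = b from rfl]
    ring
  rw [hg]
  have hz1 : z ⬝ᵥ A.mulVec z ≤ lM * a := hup z
  have hann : 0 ≤ a := dot_self_nonneg z
  have h2 : c * lM ≤ 1 := by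
    have hceq : c * lM = sl / enw := by
      rw [hc, hr]; field_simp
    rw [hceq, div_le_one henwpos]
    exact henwge
  nlinarith [mul_le_mul_of_nonneg_left hz1 hcpos.le, mul_le_mul_of_nonneg_right h2 hann,
    mul_pos hcpos hcpos]
end
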